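/- Assume: Ψ, ∂Ψ/∂r, Y, Q, Q' satisfy, as (r,R)→(0,0) and r→0⁺ respectively, Ψ(r,R) = ψ₃₀r³ + ψ₂₁r²R + ψ₁₂rR² + ψ₀₃R³ + o((|r|+|R|)³), ∂Ψ/∂r(r,R) = 3ψ₃₀r² + 2ψ₂₁rR + ψ₁₂R² + o((|r|+|R|)²), Y(r,R) = 1 + y₂₀r² + y₁₁rR + y₀₂R² + o((|r|+|R|)²), Q(r) = q₀r^{2+p} + o(r^{2+p}), Q'(r) = (2+p)q₀r^{1+p} + o(r^{1+p}), with q₀ ≠ 0, ψ₃₀ > 0 and real p > 1. Define Ψ₁ := Ψ − Q²/(2R), Y₁ := (1 − QQ'/(R·∂Ψ/∂r))·Y, u₁² := 2Ψ₁/R − 1 + Y₁². Let 0 < c₁ ≤ c₂ and let R_u : (0,ε) → ℝ satisfy c₁r^{2p+1} ≤ R_u(r) ≤ c₂r^{2p+1} and u₁²(r,R_u(r)) = 0 for all r ∈ (0,ε). Then lim_{r→0⁺} R_u(r)/r^{2p+1} = q₀²/(2ψ₃₀). -/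

import Mathlib

open Filter Topology Asymptotics

/-- The charged velocity function
`u₁²(r,R) = 2Ψ₁/R − 1 + Y₁²`, with `Ψ₁ = Ψ − Q²/(2R)` and
`Y₁ = (1 − QQ'/(R·∂Ψ/∂r))·Y`. -/
noncomputable def u1sq (Ψ Ψr Y : ℝ → ℝ → ℝ) (Q Q' : ℝ → ℝ) (r R : ℝ) : ℝ :=
  2 * (Ψ r R - Q r ^ 2 / (2 * R)) / R - 1
    + ((1 - Q r * Q' r / (R * Ψr r R)) * Y r R) ^ 2

set_option maxHeartbeats 2000000 in
/-- Equation (91): in the case `p > 1`, any curve `R_u` pinched between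
`c₁r^{2p+1}` and `c₂r^{2p+1}` on which `u₁²` vanishes satisfies
`R_u(r) = (q₀²/(2ψ₃₀))·r^{2p+1} + o(r^{2p+1})`. -/
theorem vanishing_curve_asymptotics_p_gt_one
    (Ψ Ψr Y : ℝ → ℝ → ℝ) (Q Q' : ℝ → ℝ)
    (ψ30 ψ21 ψ12 ψ03 y20 y11 y02 q0 p : ℝ)
    (hψ30 : 0 < ψ30) (hq0 : q0 ≠ 0) (hp : 1 < p)
    (hlink : ∀ r R, HasDerivAt (fun s => Ψ s R) (Ψr r R) r)
    (hQd : ∀ r, HasDerivAt Q (Q' r) r)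
    (hΨ : (fun q : ℝ × ℝ =>
        Ψ q.1 q.2 - (ψ30*q.1^3 + ψ21*q.1^2*q.2 + ψ12*q.1*q.2^2 + ψ03*q.2^3))
      =o[nhds ((0:ℝ), (0:ℝ))] fun q : ℝ × ℝ => (|q.1| + |q.2|)^3)
    (hΨr : (fun q : ℝ × ℝ =>
        Ψr q.1 q.2 - (3*ψ30*q.1^2 + 2*ψ21*q.1*q.2 + ψ12*q.2^2))
      =o[nhds ((0:ℝ), (0:ℝ))] fun q : ℝ × ℝ => (|q.1| + |q.2|)^2)
    (hY : (fun q : ℝ × ℝ =>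
        Y q.1 q.2 - (1 + y20*q.1^2 + y11*q.1*q.2 + y02*q.2^2))
      =o[nhds ((0:ℝ), (0:ℝ))] fun q : ℝ × ℝ => (|q.1| + |q.2|)^2)
    (hQ : (fun r : ℝ => Q r - q0 * r ^ (2+p)) =o[𝓝[>] (0:ℝ)] fun r : ℝ => r ^ (2+p))
    (hQ' : (fun r : ℝ => Q' r - (2+p) * q0 * r ^ (1+p))
      =o[𝓝[>] (0:ℝ)] fun r : ℝ => r ^ (1+p))
    (c₁ c₂ ε : ℝ) (hc₁ : 0 < c₁) (hc₁₂ : c₁ ≤ c₂) (hε : 0 < ε)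
    (Ru : ℝ → ℝ)
    (hRu : ∀ r ∈ Set.Ioo (0:ℝ) ε,
      c₁ * r ^ (2*p+1) ≤ Ru r ∧ Ru r ≤ c₂ * r ^ (2*p+1) ∧
      u1sq Ψ Ψr Y Q Q' r (Ru r) = 0) :
    Tendsto (fun r : ℝ => Ru r / r ^ (2*p+1)) (𝓝[>] (0:ℝ))
      (𝓝 (q0^2 / (2*ψ30))) := by
  have hc₂ : 0 < c₂ := lt_of_lt_of_le hc₁ hc₁₂
  set L : Filter ℝ := 𝓝[>] (0:ℝ) with hLdef
  have hr0 : ∀ᶠ r in L, 0 < r := self_mem_nhdsWithin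
  have hrsmall : ∀ᶠ r in L, r < min ε 1 := by
    have h : Set.Iio (min ε 1) ∈ 𝓝 (0:ℝ) := Iio_mem_nhds (by positivity)
    exact mem_nhdsWithin_of_mem_nhds h
  -- basic eventual facts
  have hbase : ∀ᶠ r in L, 0 < r ∧ r < ε ∧ r ≤ 1 := by
    filter_upwards [hr0, hrsmall] with r h1 h2
    exact ⟨h1, lt_of_lt_of_le h2 (min_le_left _ _), (lt_of_lt_of_le h2 (min_le_right _ _)).le⟩
  have hRuE : ∀ᶠ r in L,
      c₁ * r ^ (2*p+1) ≤ Ru r ∧ Ru r ≤ c₂ * r ^ (2*p+1) ∧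
      u1sq Ψ Ψr Y Q Q' r (Ru r) = 0 := by
    filter_upwards [hbase] with r hr
    exact hRu r ⟨hr.1, hr.2.1⟩
  have hRupos : ∀ᶠ r in L, 0 < Ru r := by
    filter_upwards [hbase, hRuE] with r hr hRu
    have h := Real.rpow_pos_of_pos hr.1 (2*p+1)
    exact lt_of_lt_of_le (by positivity) hRu.1
  have hRuler : ∀ᶠ r in L, Ru r ≤ c₂ * r := by
    filter_upwards [hbase, hRuE] with r hr hRu
    refine hRu.2.1.trans ?_
    have : r ^ (2*p+1) ≤ r ^ (1:ℝ) :=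
      Real.rpow_le_rpow_of_exponent_ge hr.1 hr.2.2 (by linarith)
    rw [Real.rpow_one] at this
    nlinarith
  -- r^q → 0 for q > 0
  have hrpow0 : ∀ q : ℝ, 0 < q → Tendsto (fun r : ℝ => r ^ q) L (𝓝 0) := by
    intro q hq
    have h := (Real.continuousAt_rpow_const 0 q (Or.inr hq.le)).tendsto
    rw [Real.zero_rpow hq.ne'] at h
    exact h.mono_left nhdsWithin_le_nhds
  have hid0 : Tendsto (fun r : ℝ => r) L (𝓝 0) := tendsto_id.mono_left nhdsWithin_le_nhds
  have hRu0 : Tendsto Ru L (𝓝 0) := by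
    apply squeeze_zero' (by filter_upwards [hRupos] with r h; exact h.le) hRuler
    simpa using hid0.const_mul c₂
  have htend : Tendsto (fun r => (r, Ru r)) L (𝓝 ((0:ℝ), (0:ℝ))) :=
    hid0.prodMk_nhds hRu0
  -- composition helper
  have hcomp : ∀ (f : ℝ × ℝ → ℝ) (k : ℕ),
      (f =o[𝓝 ((0:ℝ), (0:ℝ))] fun q : ℝ × ℝ => (|q.1| + |q.2|)^k) →
      Tendsto (fun r => f (r, Ru r) / r ^ k) L (𝓝 0) := by
    intro f k hf
    have h1 := hf.comp_tendsto htend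
    have h2 : (fun r => (|r| + |Ru r|)^k) =O[L] fun r => r ^ k := by
      apply IsBigO.of_bound ((1 + c₂)^k)
      filter_upwards [hr0, hRupos, hRuler] with r hr hR hle
      have hb : |r| + |Ru r| ≤ (1 + c₂) * r := by
        rw [abs_of_pos hr, abs_of_pos hR]; nlinarith
      rw [Real.norm_eq_abs, Real.norm_eq_abs,
        abs_of_nonneg (by positivity : (0:ℝ) ≤ (|r| + |Ru r|)^k),
        abs_of_nonneg (by positivity : (0:ℝ) ≤ r ^ k)]
      calc (|r| + |Ru r|)^k ≤ ((1 + c₂) * r)^k := by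
              exact pow_le_pow_left₀ (by positivity) hb k
        _ = (1 + c₂)^k * r ^ k := mul_pow _ _ _
    exact ((h1.trans_isBigO h2).tendsto_div_nhds_zero)
  -- ratio Ru r / r → 0
  have hratio : Tendsto (fun r => Ru r / r) L (𝓝 0) := by
    have hb : ∀ᶠ r in L, Ru r / r ≤ c₂ * r ^ (2*p) := by
      filter_upwards [hr0, hRuE] with r hr hRu
      rw [div_le_iff₀ hr]
      calc Ru r ≤ c₂ * r ^ (2*p+1) := hRu.2.1
        _ = c₂ * r ^ (2*p) * r := by rw [Real.rpow_add hr, Real.rpow_one]; ring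
    apply squeeze_zero' ?_ hb ?_
    · filter_upwards [hr0, hRupos] with r hr hR; positivity
    · simpa using (hrpow0 (2*p) (by linarith)).const_mul c₂
  -- Ψ limit
  have hΨA : Tendsto (fun r => Ψ r (Ru r) / r ^ 3) L (𝓝 ψ30) := by
    have h1 := hcomp _ 3 hΨ
    have t1 : Tendsto (fun r => ψ21*(Ru r/r)) L (𝓝 0) := by
      simpa using hratio.const_mul ψ21
    have t2 : Tendsto (fun r => ψ12*(Ru r/r)^2) L (𝓝 0) := by
      simpa using (hratio.pow 2).const_mul ψ12
    have t3 : Tendsto (fun r => ψ03*(Ru r/r)^3) L (𝓝 0) := by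
      simpa using (hratio.pow 3).const_mul ψ03
    have h2 : Tendsto (fun r => ψ30 + ψ21*(Ru r/r) + ψ12*(Ru r/r)^2 + ψ03*(Ru r/r)^3)
        L (𝓝 ψ30) := by
      have := (((tendsto_const_nhds (x := ψ30)).add t1).add t2).add t3
      simpa using this
    have h3 := h1.add h2
    rw [zero_add] at h3
    refine Tendsto.congr' ?_ h3
    filter_upwards [hr0] with r hr
    have hr' : r ≠ 0 := hr.ne'
    field_simp
    ring
  -- Ψr limit
  have hΨrA : Tendsto (fun r => Ψr r (Ru r) / r ^ 2) L (𝓝 (3*ψ30)) := by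
    have h1 := hcomp _ 2 hΨr
    have t1 : Tendsto (fun r => 2*ψ21*(Ru r/r)) L (𝓝 0) := by
      simpa using hratio.const_mul (2*ψ21)
    have t2 : Tendsto (fun r => ψ12*(Ru r/r)^2) L (𝓝 0) := by
      simpa using (hratio.pow 2).const_mul ψ12
    have h2 : Tendsto (fun r => 3*ψ30 + 2*ψ21*(Ru r/r) + ψ12*(Ru r/r)^2)
        L (𝓝 (3*ψ30)) := by
      have := ((tendsto_const_nhds (x := 3*ψ30)).add t1).add t2
      simpa using this
    have h3 := h1.add h2
    rw [zero_add] at h3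
    refine Tendsto.congr' ?_ h3
    filter_upwards [hr0] with r hr
    have hr' : r ≠ 0 := hr.ne'
    field_simp
    ring
  -- Y limit
  have hYA : Tendsto (fun r => Y r (Ru r)) L (𝓝 1) := by
    have h1 := hcomp _ 2 hY
    have hsq : Tendsto (fun r : ℝ => r ^ 2) L (𝓝 0) := by
      simpa using hid0.pow 2
    have h1' : Tendsto (fun r => (Y r (Ru r) - (1 + y20*r^2 + y11*r*(Ru r) + y02*(Ru r)^2)))
        L (𝓝 0) := by
      have h := h1.mul hsq
      rw [zero_mul] at h
      refine Tendsto.congr' ?_ h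
      filter_upwards [hr0] with r hr
      have hr' : (r:ℝ)^2 ≠ 0 := by positivity
      field_simp
    have t1 : Tendsto (fun r => y20*r^2) L (𝓝 0) := by
      simpa using hsq.const_mul y20
    have t2 : Tendsto (fun r => y11*r*(Ru r)) L (𝓝 0) := by
      have := (hid0.const_mul y11).mul hRu0
      simpa using this
    have t3 : Tendsto (fun r => y02*(Ru r)^2) L (𝓝 0) := by
      simpa using (hRu0.pow 2).const_mul y02
    have h2 : Tendsto (fun r => 1 + y20*r^2 + y11*r*(Ru r) + y02*(Ru r)^2) L (𝓝 1) := by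
      have := (((tendsto_const_nhds (x := (1:ℝ))).add t1).add t2).add t3
      simpa using this
    have h3 := h1'.add h2
    rw [zero_add] at h3
    refine Tendsto.congr' ?_ h3
    filter_upwards with r
    ring
  -- Q, Q' limits
  have hQA : Tendsto (fun r => Q r / r ^ (2+p)) L (𝓝 q0) := by
    have h1 := hQ.tendsto_div_nhds_zero
    have h3 := h1.add (tendsto_const_nhds (x := q0))
    rw [zero_add] at h3
    refine Tendsto.congr' ?_ h3
    filter_upwards [hr0] with r hr
    have hr' : r ^ ((2:ℝ)+p) ≠ 0 := (Real.rpow_pos_of_pos hr _).ne'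
    field_simp
    ring
  have hQ'A : Tendsto (fun r => Q' r / r ^ (1+p)) L (𝓝 ((2+p)*q0)) := by
    have h1 := hQ'.tendsto_div_nhds_zero
    have h3 := h1.add (tendsto_const_nhds (x := (2+p)*q0))
    rw [zero_add] at h3
    refine Tendsto.congr' ?_ h3
    filter_upwards [hr0] with r hr
    have hr' : r ^ ((1:ℝ)+p) ≠ 0 := (Real.rpow_pos_of_pos hr _).ne'
    field_simp
    ring
  -- bound on a := Q Q' / (Ru Ψr)
  set M₁ : ℝ := |q0 * ((2+p)*q0)| + 1 with hM₁
  have hM₁pos : 0 < M₁ := by positivity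
  have hQQ'bd : ∀ᶠ r in L, |Q r * Q' r| ≤ M₁ * r ^ (3+2*p) := by
    have hN : Tendsto (fun r => (Q r / r ^ (2+p)) * (Q' r / r ^ (1+p))) L
        (𝓝 (q0 * ((2+p)*q0))) := hQA.mul hQ'A
    have hNbd : ∀ᶠ r in L, |(Q r / r ^ (2+p)) * (Q' r / r ^ (1+p))| ≤ M₁ := by
      have hev : ∀ᶠ x in 𝓝 (q0 * ((2+p)*q0)), |x| ≤ M₁ := by
        have : Metric.ball (q0 * ((2+p)*q0)) 1 ∈ 𝓝 (q0 * ((2+p)*q0)) :=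
          Metric.ball_mem_nhds _ one_pos
        filter_upwards [this] with x hx
        rw [Metric.mem_ball, Real.dist_eq] at hx
        calc |x| ≤ |q0 * ((2+p)*q0)| + |x - q0 * ((2+p)*q0)| := by
              have := abs_sub_abs_le_abs_sub x (q0 * ((2+p)*q0)); linarith
          _ ≤ M₁ := by rw [hM₁]; linarith [hx.le]
      exact hN.eventually hev
    filter_upwards [hr0, hNbd] with r hr hbd
    have h2 : (0:ℝ) < r ^ ((2:ℝ)+p) := Real.rpow_pos_of_pos hr _
    have h3 : (0:ℝ) < r ^ ((1:ℝ)+p) := Real.rpow_pos_of_pos hr _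
    have key : Q r * Q' r = ((Q r / r ^ (2+p)) * (Q' r / r ^ (1+p))) * r ^ (3+2*p) := by
      rw [div_mul_div_comm, ← Real.rpow_add hr, show (2:ℝ)+p+(1+p) = 3+2*p by ring,
        div_mul_cancel₀]
      exact (Real.rpow_pos_of_pos hr _).ne' 
    rw [key, abs_mul, abs_of_pos (Real.rpow_pos_of_pos hr (3+2*p))]
    exact mul_le_mul_of_nonneg_right hbd (Real.rpow_pos_of_pos hr _).le
  have hΨrlow : ∀ᶠ r in L, 3*ψ30/2 * r ^ 2 ≤ Ψr r (Ru r) := by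
    have := hΨrA.eventually_const_lt (show 3*ψ30/2 < 3*ψ30 by linarith)
    filter_upwards [hr0, this] with r hr h
    have hr2 : (0:ℝ) < r ^ 2 := by positivity
    calc 3*ψ30/2 * r^2 ≤ (Ψr r (Ru r) / r^2) * r^2 := by nlinarith
      _ = Ψr r (Ru r) := by field_simp
  set d : ℝ := c₁ * (3*ψ30/2) with hd
  have hdpos : 0 < d := by positivity
  have hdenlow : ∀ᶠ r in L, d * r ^ (3+2*p) ≤ Ru r * Ψr r (Ru r) := by
    filter_upwards [hr0, hRuE, hΨrlow, hRupos] with r hr hRu hΨrl hRp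
    have h1 : c₁ * r ^ (2*p+1) ≤ Ru r := hRu.1
    have hx : (0:ℝ) < r ^ (2*p+1) := Real.rpow_pos_of_pos hr _
    have hy : (0:ℝ) < r ^ 2 := by positivity
    have hps : 0 < Ψr r (Ru r) := lt_of_lt_of_le (by positivity) hΨrl
    have heq : r ^ (3+2*p) = r ^ (2*p+1) * r ^ 2 := by
      rw [show ((r:ℝ) ^ 2 : ℝ) = r ^ ((2:ℕ):ℝ) from (Real.rpow_natCast r 2).symm,
        ← Real.rpow_add hr]
      congr 1
      push_cast
      ring
    rw [heq]
    calc d * (r ^ (2*p+1) * r ^ 2) = (c₁ * r ^ (2*p+1)) * (3*ψ30/2 * r ^ 2) := by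
          rw [hd]; ring
      _ ≤ Ru r * Ψr r (Ru r) := by
          apply mul_le_mul h1 hΨrl (by positivity) hRp.le
  set A : ℝ := M₁ / d with hA
  have hApos : 0 < A := by positivity
  have habd : ∀ᶠ r in L, |Q r * Q' r / (Ru r * Ψr r (Ru r))| ≤ A := by
    filter_upwards [hr0, hQQ'bd, hdenlow] with r hr h1 h2
    have hx : (0:ℝ) < r ^ (3+2*p) := Real.rpow_pos_of_pos hr _
    have hden : 0 < Ru r * Ψr r (Ru r) := lt_of_lt_of_le (by positivity) h2
    rw [abs_div, abs_of_pos hden, div_le_iff₀ hden, hA]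
    calc |Q r * Q' r| ≤ M₁ * r ^ (3+2*p) := h1
      _ = (M₁/d) * (d * r ^ (3+2*p)) := by field_simp
      _ ≤ (M₁/d) * (Ru r * Ψr r (Ru r)) := by
          apply mul_le_mul_of_nonneg_left h2 (by positivity)
  -- bound on 1 - Y1^2
  have hYbd : ∀ᶠ r in L, |Y r (Ru r)| ≤ 2 := by
    have hev : ∀ᶠ x in 𝓝 (1:ℝ), |x| ≤ 2 := by
      have : Set.Ioo (0:ℝ) 2 ∈ 𝓝 (1:ℝ) := Ioo_mem_nhds one_pos one_lt_two
      filter_upwards [this] with x hx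
      rw [abs_le]; constructor <;> linarith [hx.1, hx.2]
    exact hYA.eventually hev
  set M : ℝ := 1 + ((1+A)*2)^2 with hM
  have hY1bd : ∀ᶠ r in L,
      |1 - ((1 - Q r * Q' r / (Ru r * Ψr r (Ru r))) * Y r (Ru r))^2| ≤ M := by
    filter_upwards [habd, hYbd] with r h1 h2
    have hy1 : |(1 - Q r * Q' r / (Ru r * Ψr r (Ru r))) * Y r (Ru r)| ≤ (1+A)*2 := by
      rw [abs_mul]
      apply mul_le_mul ?_ h2 (abs_nonneg _) (by positivity)
      calc |1 - Q r * Q' r / (Ru r * Ψr r (Ru r))| ≤ |(1:ℝ)| + |Q r * Q' r / (Ru r * Ψr r (Ru r))| := abs_sub _ _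
        _ ≤ 1 + A := by rw [abs_one]; linarith
    calc |1 - ((1 - Q r * Q' r / (Ru r * Ψr r (Ru r))) * Y r (Ru r))^2|
        ≤ |(1:ℝ)| + |((1 - Q r * Q' r / (Ru r * Ψr r (Ru r))) * Y r (Ru r))^2| := abs_sub _ _
      _ ≤ M := by
          rw [abs_one, abs_pow, hM]
          have := abs_nonneg ((1 - Q r * Q' r / (Ru r * Ψr r (Ru r))) * Y r (Ru r))
          nlinarith [hy1]
  -- the correction term tends to zero
  have hC : Tendsto (fun r => (Ru r / r ^ (2*p+1))^2 * r ^ (2*p-2) *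
      (1 - ((1 - Q r * Q' r / (Ru r * Ψr r (Ru r))) * Y r (Ru r))^2)) L (𝓝 0) := by
    refine squeeze_zero_norm' (a := fun r => c₂^2 * M * r ^ (2*p-2)) ?_ ?_
    · filter_upwards [hr0, hRuE, hRupos, hY1bd] with r hr hRu hRp hY1
      have hx : (0:ℝ) < r ^ (2*p+1) := Real.rpow_pos_of_pos hr _
      have hx2 : (0:ℝ) < r ^ (2*p-2) := Real.rpow_pos_of_pos hr _
      have hlam : |Ru r / r ^ (2*p+1)| ≤ c₂ := by
        rw [abs_of_pos (by positivity), div_le_iff₀ hx]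
        exact hRu.2.1
      rw [Real.norm_eq_abs, abs_mul, abs_mul, abs_pow, abs_of_pos hx2]
      have hMpos : 0 < M := by positivity
      calc |Ru r / r ^ (2*p+1)|^2 * r ^ (2*p-2) * |1 - ((1 - Q r * Q' r / (Ru r * Ψr r (Ru r))) * Y r (Ru r))^2|
          ≤ c₂^2 * r ^ (2*p-2) * M := by
            apply mul_le_mul ?_ hY1 (abs_nonneg _) (by positivity)
            apply mul_le_mul_of_nonneg_right ?_ hx2.le
            exact pow_le_pow_left₀ (abs_nonneg _) hlam 2
        _ = c₂^2 * M * r ^ (2*p-2) := by ring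
    · have := (hrpow0 (2*p-2) (by linarith)).const_mul (c₂^2 * M)
      simpa using this
  -- assemble
  have hden : Tendsto (fun r => 2 * (Ψ r (Ru r) / r ^ 3)) L (𝓝 (2*ψ30)) :=
    hΨA.const_mul 2
  have hnum : Tendsto (fun r => (Q r / r ^ (2+p))^2 + (Ru r / r ^ (2*p+1))^2 * r ^ (2*p-2) *
      (1 - ((1 - Q r * Q' r / (Ru r * Ψr r (Ru r))) * Y r (Ru r))^2)) L (𝓝 (q0^2 + 0)) :=
    (hQA.pow 2).add hC
  have hfinal := hnum.div hden (by positivity)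
  rw [show (q0^2 + 0) / (2*ψ30) = q0^2/(2*ψ30) by ring] at hfinal
  refine Tendsto.congr' ?_ hfinal
  have hΨpos : ∀ᶠ r in L, 0 < Ψ r (Ru r) := by
    have := hΨA.eventually_const_lt (show ψ30/2 < ψ30 by linarith)
    filter_upwards [hr0, this] with r hr h
    have hr3 : (0:ℝ) < r ^ 3 := by positivity
    have h' : 0 < Ψ r (Ru r) / r ^ 3 := lt_trans (by positivity) h
    have := mul_pos h' hr3
    rwa [div_mul_cancel₀ _ hr3.ne'] at this
  filter_upwards [hr0, hRuE, hRupos, hΨpos] with r hr hRu hRp hΨp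
  simp only [Pi.div_apply]
  -- algebraic identity from u1sq = 0
  have hu := hRu.2.2
  rw [u1sq] at hu
  set Y1 : ℝ := (1 - Q r * Q' r / (Ru r * Ψr r (Ru r))) * Y r (Ru r) with hY1def
  have hR' : Ru r ≠ 0 := hRp.ne'
  have key : 2 * Ψ r (Ru r) * Ru r = Q r ^ 2 + Ru r ^ 2 * (1 - Y1^2) := by
    field_simp at hu
    nlinarith [hu]
  have hs : (0:ℝ) < r ^ p := Real.rpow_pos_of_pos hr _
  have e1 : r ^ (2*p+1) = r ^ p * r ^ p * r := by
    rw [show 2*p+1 = p + p + 1 by ring, Real.rpow_add hr, Real.rpow_add hr, Real.rpow_one]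
  have e2 : r ^ ((2:ℝ)+p) = r ^ p * r * r := by
    rw [show (2:ℝ)+p = p + 1 + 1 by ring, Real.rpow_add hr, Real.rpow_add hr, Real.rpow_one]
  have e3 : r ^ (2*p-2) = r ^ p * r ^ p / (r * r) := by
    rw [eq_div_iff (by positivity : (r*r) ≠ 0),
      show r*r = r^(2:ℝ) by rw [show (2:ℝ)=1+1 by norm_num, Real.rpow_add hr, Real.rpow_one],
      ← Real.rpow_add hr, ← Real.rpow_add hr]
    congr 1
    ring
  rw [e1, e2, e3]
  have hΨ' : Ψ r (Ru r) ≠ 0 := hΨp.ne'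
  have hr' : r ≠ 0 := hr.ne'
  clear_value Y1
  field_simp
  linear_combination (-1:ℝ) * key
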